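/- The subalgebra of degree-zero elements of U(W_{≥-1}) (with respect to the grading deg e_i = i) is generated as a k-algebra by the three elements e_0, e_{-1}e_1, and e_{-1}^2 e_2. -/

import Mathlib

noncomputable section

/-- Index set `{i : ℤ | i ≥ -1}` of the basis `e_i` of the one-sided Witt algebra. -/
abbrev WIdx : Type := {i : ℤ // -1 ≤ i}

/-- The defining relations `e_i e_j = e_j e_i + (j - i) e_{i+j}` of the universal
enveloping algebra of the one-sided Witt algebra `W_{≥ -1}`. -/
inductive wittRel (k : Type) [Field k] :
    FreeAlgebra k WIdx → FreeAlgebra k WIdx → Prop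
  | rel (i j : WIdx) (h : -1 ≤ i.1 + j.1) :
      wittRel k (FreeAlgebra.ι k i * FreeAlgebra.ι k j)
        (FreeAlgebra.ι k j * FreeAlgebra.ι k i +
          (j.1 - i.1) • FreeAlgebra.ι k (⟨i.1 + j.1, h⟩ : WIdx))

/-- The universal enveloping algebra `U(W_{≥ -1})`, presented by generators `e_i` (`i ≥ -1`)
and the relations `[e_i, e_j] = (j - i) e_{i+j}`. -/
abbrev UW (k : Type) [Field k] := RingQuot (wittRel k)

/-- The generator `e_i` of `U(W_{≥ -1})` (junk value `0` for `i < -1`). -/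
def eW (k : Type) [Field k] (i : ℤ) : UW k :=
  if h : -1 ≤ i then RingQuot.mkAlgHom k (wittRel k) (FreeAlgebra.ι k ⟨i, h⟩) else 0

/-- The differentiators: `Ω^0_{k,s} = e_k e_s`, `Ω^{m+1}_{k,s} = Ω^m_{k,s} - Ω^m_{k-1,s+1}`. -/
def Ω (k : Type) [Field k] : ℕ → ℤ → ℤ → UW k
  | 0, a, s => eW k a * eW k s
  | m + 1, a, s => Ω k m a s - Ω k m (a - 1) (s + 1)

/-- The product in `U(W_{≥-1})` of the word of generators indexed by a list `L`. -/
def wordProd (k : Type) [Field k] (L : List WIdx) : UW k :=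
  (L.map fun i => RingQuot.mkAlgHom k (wittRel k) (FreeAlgebra.ι k i)).prod

/-- The degree-zero component of `U(W_{≥-1})` for the grading `deg e_i = i`:
the span of the monomials `e_{m_1} ⋯ e_{m_l}` with `m_1 + ⋯ + m_l = 0`. -/
def degZeroUW (k : Type) [Field k] : Submodule k (UW k) :=
  Submodule.span k
    {x : UW k | ∃ L : List WIdx, (L.map Subtype.val).sum = 0 ∧ x = wordProd k L}

/-! ### Auxiliary lemmas -/

section Aux

variable (k : Type) [Field k]

lemma eW_eq (i : WIdx) : RingQuot.mkAlgHom k (wittRel k) (FreeAlgebra.ι k i) = eW k i.1 := by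
  rw [eW, dif_pos i.2]

@[simp] lemma wordProd_nil : wordProd k ([] : List WIdx) = 1 := rfl

lemma wordProd_cons (i : WIdx) (L : List WIdx) :
    wordProd k (i :: L) = eW k i.1 * wordProd k L := by
  rw [wordProd, List.map_cons, List.prod_cons, eW_eq, wordProd]

lemma wordProd_append (L M : List WIdx) :
    wordProd k (L ++ M) = wordProd k L * wordProd k M := by
  simp [wordProd, List.map_append, List.prod_append]

lemma wordProd_replicate (m : ℕ) (i : WIdx) :
    wordProd k (List.replicate m i) = (eW k i.1) ^ m := by
  induction m with
  | zero => simp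
  | succ n ih => rw [List.replicate_succ, wordProd_cons, ih, pow_succ']

lemma wittComm (i j : ℤ) (hi : -1 ≤ i) (hj : -1 ≤ j) (hij : -1 ≤ i + j) :
    eW k i * eW k j = eW k j * eW k i + (j - i) • eW k (i + j) := by
  have h := RingQuot.mkAlgHom_rel k (wittRel.rel (k := k) ⟨i, hi⟩ ⟨j, hj⟩ hij)
  rw [map_mul, map_add, map_mul, map_zsmul] at h
  simpa only [eW_eq] using h

/-- Span of products of words of length at most `l` and degree sum `s`. -/
def Dspan (l : ℕ) (s : ℤ) : Submodule k (UW k) :=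
  Submodule.span k
    {x : UW k | ∃ L : List WIdx, L.length ≤ l ∧ (L.map Subtype.val).sum = s ∧ x = wordProd k L}

lemma Dspan_word_mem {L : List WIdx} {l : ℕ} {s : ℤ} (hl : L.length ≤ l)
    (hs : (L.map Subtype.val).sum = s) : wordProd k L ∈ Dspan k l s :=
  Submodule.subset_span ⟨L, hl, hs, rfl⟩

lemma Dspan_mul_left (i : WIdx) {l : ℕ} {s : ℤ} {x : UW k} (hx : x ∈ Dspan k l s) :
    eW k i.1 * x ∈ Dspan k (l + 1) (i.1 + s) := by
  induction hx using Submodule.span_induction with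
  | mem x hx =>
    obtain ⟨L, h1, h2, rfl⟩ := hx
    rw [← wordProd_cons]
    exact Dspan_word_mem k (by simpa using Nat.succ_le_succ h1)
      (by rw [List.map_cons, List.sum_cons, h2])
  | zero => simp
  | add x y _ _ hx hy => rw [mul_add]; exact add_mem hx hy
  | smul a x _ hx => rw [mul_smul_comm]; exact Submodule.smul_mem _ _ hx

lemma perm_diff_mem {L L' : List WIdx} (p : L.Perm L') :
    ∀ n : ℕ, L.length ≤ n + 1 →
      wordProd k L - wordProd k L' ∈ Dspan k n ((L.map Subtype.val).sum) := by
  induction p with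
  | nil => intro n _; simp
  | @cons x L L' p ih =>
    intro n hn
    match n, hn with
    | 0, hn =>
      have : L = [] := by
        have : L.length = 0 := by simpa using Nat.le_of_succ_le_succ hn
        exact List.length_eq_zero_iff.mp this
      subst this
      have : L' = [] := List.Perm.eq_nil (p.symm)
      subst this
      simp
    | n + 1, hn =>
      have h := ih n (by simpa using Nat.le_of_succ_le_succ hn)
      have h2 := Dspan_mul_left k x h
      rw [mul_sub, ← wordProd_cons, ← wordProd_cons] at h2
      simpa using h2
  | swap x y L =>
    intro n hn
    have hL : L.length + 1 ≤ n := by simpa [Nat.succ_le_succ_iff] using hn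
    rcases eq_or_ne ((x.1 : ℤ)) y.1 with hxy | hxy
    · have : x = y := Subtype.ext hxy
      subst this; simp
    · have hsum : -1 ≤ y.1 + x.1 := by
        rcases lt_or_ge (-1 : ℤ) x.1 with h | h
        · have := y.2; omega
        · have hx1 : x.1 = -1 := le_antisymm h x.2
          have : y.1 ≠ -1 := fun h' => hxy (hx1.trans h'.symm)
          have := y.2; omega
      have hc := wittComm k y.1 x.1 y.2 x.2 hsum
      rw [wordProd_cons, wordProd_cons, wordProd_cons, wordProd_cons, ← mul_assoc, ← mul_assoc,
        hc]
      rw [add_mul, add_sub_cancel_left, smul_mul_assoc]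
      refine Submodule.smul_mem _ _ ?_
      have h3 : wordProd k ((⟨y.1 + x.1, hsum⟩ : WIdx) :: L) = eW k (y.1 + x.1) * wordProd k L :=
        wordProd_cons k _ L
      show eW k (y.1 + x.1) * wordProd k L ∈ _
      rw [← h3]
      refine Dspan_word_mem k (L := (⟨y.1 + x.1, hsum⟩ : WIdx) :: L) (by simpa using hL) ?_
      simp only [List.map_cons, List.sum_cons]
      ring
  | @trans L₁ L₂ L₃ p1 p2 ih1 ih2 =>
    intro n hn
    have hlen : L₂.length = L₁.length := (p1.length_eq).symm
    have hsum : (L₂.map Subtype.val).sum = (L₁.map Subtype.val).sum :=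
      List.Perm.sum_eq (p1.map Subtype.val).symm
    have h1 := ih1 n hn
    have h2 := ih2 n (by omega)
    rw [hsum] at h2
    simpa using add_mem h1 h2

/-- Slide `e_0` left past a power of `e_{-1}`. -/
lemma e0_slide (p : ℕ) :
    eW k 0 * (eW k (-1)) ^ p = (eW k (-1)) ^ p * eW k 0 - (p : ℤ) • (eW k (-1)) ^ p := by
  induction p with
  | zero => simp
  | succ p ih =>
    have h0 : eW k 0 * eW k (-1) = eW k (-1) * eW k 0 - eW k (-1) := by
      have := wittComm k 0 (-1) (by norm_num) (by norm_num) (by norm_num)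
      rw [this]; norm_num; abel
    rw [pow_succ, ← mul_assoc, ih]
    simp only [sub_mul, smul_mul_assoc, mul_assoc]
    rw [h0]
    simp only [pow_succ, mul_sub, mul_smul_comm, mul_assoc, smul_sub]
    match_scalars <;> push_cast <;> ring

/-- Slide `e_1` left past a power of `e_{-1}`. -/
lemma e1_slide (p : ℕ) :
    eW k 1 * (eW k (-1)) ^ (p + 1)
      = (eW k (-1)) ^ (p + 1) * eW k 1
        - (2 * (p + 1) : ℤ) • ((eW k (-1)) ^ p * eW k 0)
        + ((p + 1) * p : ℤ) • (eW k (-1)) ^ p := by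
  have h1 : eW k 1 * eW k (-1) = eW k (-1) * eW k 1 - (2 : ℤ) • eW k 0 := by
    have := wittComm k 1 (-1) (by norm_num) (by norm_num) (by norm_num)
    rw [this]; norm_num; abel
  have h0 : eW k 0 * eW k (-1) = eW k (-1) * eW k 0 - eW k (-1) := by
    have := wittComm k 0 (-1) (by norm_num) (by norm_num) (by norm_num)
    rw [this]; norm_num; abel
  induction p with
  | zero => simpa using h1
  | succ p ih =>
    rw [pow_succ, ← mul_assoc, ih]
    simp only [sub_mul, add_mul, smul_mul_assoc, mul_assoc]
    rw [h1, h0]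
    simp only [pow_succ, mul_sub, mul_add, mul_smul_comm, mul_assoc, smul_sub, smul_add,
      smul_smul]
    match_scalars <;> push_cast <;> ring

set_option maxHeartbeats 1000000 in
/-- The key identity: `(m+1) Θ_{m+3}` is a commutator of `Θ_1` and `Θ_{m+2}` plus corrections. -/
lemma theta_identity (m : ℕ) :
    ((m : ℤ) + 1) • ((eW k (-1)) ^ (m + 3) * eW k ((m : ℤ) + 3))
      = (eW k (-1) * eW k 1) * ((eW k (-1)) ^ (m + 2) * eW k ((m : ℤ) + 2))
        - ((eW k (-1)) ^ (m + 2) * eW k ((m : ℤ) + 2)) * (eW k (-1) * eW k 1)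
        + (2 * ((m : ℤ) + 2)) • ((eW k (-1)) ^ (m + 2) * eW k 0 * eW k ((m : ℤ) + 2))
        - (((m : ℤ) + 2) * ((m : ℤ) + 1)) • ((eW k (-1)) ^ (m + 2) * eW k ((m : ℤ) + 2))
        - ((m : ℤ) + 3) • ((eW k (-1)) ^ (m + 2) * eW k ((m : ℤ) + 1) * eW k 1) := by
  have hm2 : (-1 : ℤ) ≤ (m : ℤ) + 2 := by omega
  have hA : eW k ((m : ℤ) + 2) * eW k (-1)
      = eW k (-1) * eW k ((m : ℤ) + 2) - ((m : ℤ) + 3) • eW k ((m : ℤ) + 1) := by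
    have h := wittComm k ((m : ℤ) + 2) (-1) hm2 (by norm_num) (by omega)
    rw [show ((m : ℤ) + 2) + (-1) = (m : ℤ) + 1 by ring] at h
    rw [h, show (-1 - ((m : ℤ) + 2)) = -((m : ℤ) + 3) by ring, neg_smul]
    abel
  have hB : eW k ((m : ℤ) + 2) * eW k 1
      = eW k 1 * eW k ((m : ℤ) + 2) - ((m : ℤ) + 1) • eW k ((m : ℤ) + 3) := by
    have h := wittComm k ((m : ℤ) + 2) 1 hm2 (by norm_num) (by omega)
    rw [show ((m : ℤ) + 2) + 1 = (m : ℤ) + 3 by ring] at h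
    rw [h, show (1 - ((m : ℤ) + 2)) = -((m : ℤ) + 1) by ring, neg_smul]
    abel
  have hs' : eW k 1 * (eW k (-1)) ^ (m + 2)
      = (eW k (-1)) ^ (m + 2) * eW k 1
        - (2 * ((m : ℤ) + 1 + 1)) • ((eW k (-1)) ^ (m + 1) * eW k 0)
        + (((m : ℤ) + 1 + 1) * ((m : ℤ) + 1)) • (eW k (-1)) ^ (m + 1) := by
    have h := e1_slide k (m + 1)
    push_cast at h
    exact h
  have exp1 : (eW k (-1) * eW k 1) * ((eW k (-1)) ^ (m + 2) * eW k ((m : ℤ) + 2))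
      = eW k (-1) * ((eW k 1 * (eW k (-1)) ^ (m + 2)) * eW k ((m : ℤ) + 2)) := by
    simp only [mul_assoc]
  have exp2 : ((eW k (-1)) ^ (m + 2) * eW k ((m : ℤ) + 2)) * (eW k (-1) * eW k 1)
      = (eW k (-1)) ^ (m + 2) * ((eW k ((m : ℤ) + 2) * eW k (-1)) * eW k 1) := by
    simp only [mul_assoc]
  rw [exp1, exp2, hs', hA]
  simp only [sub_mul, add_mul, smul_mul_assoc, mul_sub, mul_add, mul_smul_comm, smul_sub,
    smul_add, smul_smul, mul_assoc]
  rw [hB]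
  simp only [sub_mul, add_mul, smul_mul_assoc, mul_sub, mul_add, mul_smul_comm,
    smul_sub, smul_add, smul_smul, ← mul_assoc]
  simp only [← pow_succ, ← pow_succ']
  match_scalars <;> push_cast <;> ring

/-- Any `m` copies of an element can be extracted from a list, up to permutation. -/
lemma exists_perm_replicate {α : Type} [BEq α] [LawfulBEq α] (x : α) :
    ∀ (m : ℕ) (l : List α), m ≤ l.count x → ∃ l₁, l.Perm (List.replicate m x ++ l₁) := by
  intro m
  induction m with
  | zero => intro l _; exact ⟨l, by simp⟩
  | succ m ih =>
    intro l hc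
    have hx : x ∈ l := List.count_pos_iff.mp (by omega)
    have h1 : m ≤ (l.erase x).count x := by
      rw [List.count_erase_self]; omega
    obtain ⟨l₁, hp⟩ := ih (l.erase x) h1
    refine ⟨l₁, (List.perm_cons_erase hx).trans ?_⟩
    rw [List.replicate_succ, List.cons_append]
    exact hp.cons x

/-- A list of integers all `≥ -1` has sum at least minus the number of `-1`'s. -/
lemma neg_count_le_sum : ∀ l : List ℤ, (∀ x ∈ l, -1 ≤ x) → -((l.count (-1) : ℕ) : ℤ) ≤ l.sum := by
  intro l
  induction l with
  | nil => simp
  | cons x t ih =>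
    intro h
    have ht := ih (fun y hy => h y (List.mem_cons_of_mem _ hy))
    have hx := h x List.mem_cons_self
    rcases eq_or_ne x (-1) with rfl | hne
    · have hc : ((-1 : ℤ) :: t).count (-1) = t.count (-1) + 1 := by
        simp [List.count_cons]
      rw [List.sum_cons, hc]
      push_cast
      omega
    · have hge : (0 : ℤ) ≤ x := by
        rcases eq_or_lt_of_le hx with h' | h'
        · exact absurd h'.symm hne
        · omega
      have hc : (x :: t).count (-1) = t.count (-1) := by
        simp [List.count_cons, Ne.symm hne, hne]
      rw [List.sum_cons, hc]
      omega

end Aux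

/-! ### Main argument -/

section Main

variable (k : Type) [Field k] [CharZero k]

local notation "AW" => Algebra.adjoin k {eW k 0, eW k (-1) * eW k 1, (eW k (-1)) ^ 2 * eW k 2}

lemma gen0_mem : eW k 0 ∈ AW := Algebra.subset_adjoin (Set.mem_insert _ _)

lemma gen1_mem : eW k (-1) * eW k 1 ∈ AW :=
  Algebra.subset_adjoin (Set.mem_insert_of_mem _ (Set.mem_insert _ _))

lemma gen2_mem : (eW k (-1)) ^ 2 * eW k 2 ∈ AW :=
  Algebra.subset_adjoin (Set.mem_insert_of_mem _ (Set.mem_insert_of_mem _ rfl))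

/-- The main lemma: every degree-zero word lies in the subalgebra generated by
`e_0`, `e_{-1} e_1` and `e_{-1}^2 e_2`. -/
lemma word_mem_adjoin : ∀ (l : ℕ) (L : List WIdx), L.length ≤ l →
    (L.map Subtype.val).sum = 0 → wordProd k L ∈ AW := by
  intro l
  induction l using Nat.strong_induction_on with
  | _ l ih =>
  intro L hlen hsum
  rcases Nat.lt_or_ge L.length l with hlt | hge
  · exact ih L.length hlt L le_rfl hsum
  have hEq : L.length = l := le_antisymm hlen hge
  -- words shorter than `l` are taken care of by the induction hypothesis
  have hD : ∀ n : ℕ, n < l → ∀ x : UW k, x ∈ Dspan k n 0 → x ∈ AW := by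
    intro n hn x hx
    have hle : Dspan k n 0 ≤ Subalgebra.toSubmodule AW := by
      refine Submodule.span_le.mpr ?_
      rintro z ⟨M, hM1, hM2, rfl⟩
      exact ih n hn M hM1 hM2
    exact hle hx
  rcases L with _ | ⟨x0, L0⟩
  · simpa using one_mem AW
  set L : List WIdx := x0 :: L0 with hL
  have hl1 : 1 ≤ l := by rw [← hEq]; simp [hL]
  -- helper to conclude membership from a permutation
  have key : ∀ B : List WIdx, L.Perm B → wordProd k B ∈ AW → wordProd k L ∈ AW := by
    intro B pB hB
    have hd := perm_diff_mem k pB (l - 1) (by omega)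
    rw [hsum] at hd
    have : wordProd k L = (wordProd k L - wordProd k B) + wordProd k B := by abel
    rw [this]
    exact add_mem (hD (l - 1) (by omega) _ hd) hB
  by_cases h0 : (⟨0, by norm_num⟩ : WIdx) ∈ L
  · -- `L` contains `e_0`
    have p0 : L.Perm ((⟨0, by norm_num⟩ : WIdx) :: L.erase ⟨0, by norm_num⟩) :=
      List.perm_cons_erase h0
    refine key _ p0 ?_
    rw [wordProd_cons]
    have hsum0 : ((L.erase ⟨0, by norm_num⟩).map Subtype.val).sum = 0 := by
      have := List.Perm.sum_eq (p0.map Subtype.val)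
      rw [hsum] at this
      simpa using this.symm
    have hlen0 : (L.erase ⟨0, by norm_num⟩).length ≤ l - 1 := by
      have := p0.length_eq
      simp at this
      omega
    exact mul_mem (gen0_mem k) (ih (l - 1) (by omega) _ hlen0 hsum0)
  · -- `L` contains no `e_0`; find a positive letter
    have hpos : ∃ y ∈ L, 1 ≤ y.1 := by
      by_contra hcon
      push_neg at hcon
      have hall : ∀ z ∈ L.map Subtype.val, z = -1 := by
        intro z hz
        obtain ⟨y, hyL, rfl⟩ := List.mem_map.mp hz
        have h1 := y.2
        have h2 := hcon y hyL
        rcases eq_or_ne y.1 0 with h3 | h3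
        · exact absurd (Subtype.ext h3 : y = ⟨0, by norm_num⟩) (fun h => h0 (h ▸ hyL))
        · omega
      have : (L.map Subtype.val) = List.replicate (L.map Subtype.val).length (-1) :=
        List.eq_replicate_of_mem hall
      rw [this, List.sum_replicate, List.length_map, hEq, nsmul_eq_mul] at hsum
      omega
    obtain ⟨y, hyL, hy1⟩ := hpos
    set py : ℕ := y.1.toNat with hpy
    have hyval : y.1 = (py : ℤ) := (Int.toNat_of_nonneg (by omega)).symm
    have hpy1 : 1 ≤ py := by omega
    have p1 : L.Perm (y :: L.erase y) := List.perm_cons_erase hyL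
    have hsumLy : ((L.erase y).map Subtype.val).sum = -y.1 := by
      have h' := List.Perm.sum_eq (p1.map Subtype.val)
      rw [hsum, List.map_cons, List.sum_cons] at h'
      omega
    have hcnt : py ≤ (L.erase y).count ⟨-1, by norm_num⟩ := by
      have hmem : ∀ x ∈ (L.erase y).map Subtype.val, -1 ≤ x := by
        intro x hx
        obtain ⟨z, _, rfl⟩ := List.mem_map.mp hx
        exact z.2
      have h1 := neg_count_le_sum ((L.erase y).map Subtype.val) hmem
      rw [hsumLy] at h1
      have h2 : ((L.erase y).map Subtype.val).count (-1) = (L.erase y).count ⟨-1, by norm_num⟩ :=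
        List.count_map_of_injective _ Subtype.val Subtype.val_injective ⟨-1, by norm_num⟩
      omega
    obtain ⟨L₁, hperm⟩ := exists_perm_replicate (⟨-1, by norm_num⟩ : WIdx) py (L.erase y) hcnt
    have p2 : L.Perm ((List.replicate py (⟨-1, by norm_num⟩ : WIdx) ++ [y]) ++ L₁) := by
      have q : (List.replicate py (⟨-1, by norm_num⟩ : WIdx) ++ [y]) ++ L₁
          = List.replicate py (⟨-1, by norm_num⟩ : WIdx) ++ (y :: L₁) := by
        simp [List.append_assoc]
      rw [q]
      exact (p1.trans (hperm.cons y)).trans List.perm_middle.symm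
    have hlength : l = py + 1 + L₁.length := by
      have := p2.length_eq
      rw [hEq] at this
      simp at this
      omega
    have hsumθ : ((List.replicate py (⟨-1, by norm_num⟩ : WIdx) ++ [y]).map Subtype.val).sum
        = 0 := by
      simp only [List.map_append, List.map_replicate, List.map_cons, List.map_nil,
        List.sum_append, List.sum_replicate, List.sum_cons, List.sum_nil, nsmul_eq_mul, add_zero]
      omega
    have hsumL₁ : (L₁.map Subtype.val).sum = 0 := by
      have h'' := List.Perm.sum_eq (p2.map Subtype.val)
      rw [hsum, List.map_append, List.sum_append, hsumθ] at h''
      omega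
    refine key _ p2 ?_
    rw [wordProd_append]
    rcases eq_or_ne L₁ [] with rfl | hL₁ne
    · -- the critical case: `L` is a permutation of `e_{-1}^p e_p`
      rw [wordProd_nil, mul_one]
      have hθ : wordProd k (List.replicate py (⟨-1, by norm_num⟩ : WIdx) ++ [y])
          = (eW k (-1)) ^ py * eW k (py : ℤ) := by
        rw [wordProd_append, wordProd_replicate, wordProd_cons, wordProd_nil, mul_one, ← hyval]
      rw [hθ]
      have hlpy : l = py + 1 := by simpa using hlength
      -- case on `py`
      match py, hpy1 with
      | 1, _ => simpa using gen1_mem k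
      | 2, _ => simpa using gen2_mem k
      | (m + 3), _ =>
        -- use the theta identity
        have hlm : l = m + 4 := by omega
        have hT2 : (eW k (-1)) ^ (m + 2) * eW k ((m : ℤ) + 2) ∈ AW := by
          have := ih (m + 3) (by omega)
            (List.replicate (m + 2) (⟨-1, by norm_num⟩ : WIdx) ++ [⟨(m : ℤ) + 2, by omega⟩])
            (by simp) (by simp [List.map_replicate, List.sum_replicate])
          rwa [wordProd_append, wordProd_replicate, wordProd_cons, wordProd_nil, mul_one] at this
        have hT2' : (eW k (-1)) ^ (m + 1) * eW k ((m : ℤ) + 1) ∈ AW := by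
          have := ih (m + 2) (by omega)
            (List.replicate (m + 1) (⟨-1, by norm_num⟩ : WIdx) ++ [⟨(m : ℤ) + 1, by omega⟩])
            (by simp) (by simp [List.map_replicate, List.sum_replicate])
          rwa [wordProd_append, wordProd_replicate, wordProd_cons, wordProd_nil, mul_one] at this
        -- W2 = E^(m+2) * e_0 * e_(m+2)
        have hW2 : (eW k (-1)) ^ (m + 2) * eW k 0 * eW k ((m : ℤ) + 2) ∈ AW := by
          set w2 : List WIdx := List.replicate (m + 2) (⟨-1, by norm_num⟩ : WIdx)
            ++ [⟨0, by norm_num⟩, ⟨(m : ℤ) + 2, by omega⟩] with hw2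
          have hw2sum : (w2.map Subtype.val).sum = 0 := by
            simp [hw2, List.map_replicate, List.sum_replicate]
          have pw2 : w2.Perm ((⟨0, by norm_num⟩ : WIdx) ::
              (List.replicate (m + 2) (⟨-1, by norm_num⟩ : WIdx) ++ [⟨(m : ℤ) + 2, by omega⟩])) :=
            List.perm_middle
          have hd := perm_diff_mem k pw2 (m + 3) (by simp [hw2])
          rw [hw2sum] at hd
          have hmem2 : wordProd k ((⟨0, by norm_num⟩ : WIdx) ::
              (List.replicate (m + 2) (⟨-1, by norm_num⟩ : WIdx) ++ [⟨(m : ℤ) + 2, by omega⟩]))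
              ∈ AW := by
            rw [wordProd_cons, wordProd_append, wordProd_replicate, wordProd_cons, wordProd_nil,
              mul_one]
            exact mul_mem (gen0_mem k) hT2
          have : wordProd k w2 ∈ AW := by
            have hadd := add_mem (hD (m + 3) (by omega) _ hd) hmem2
            simpa using hadd
          rwa [hw2, wordProd_append, wordProd_replicate, wordProd_cons, wordProd_cons,
            wordProd_nil, mul_one, ← mul_assoc] at this
        -- W1 = E^(m+2) * e_(m+1) * e_1
        have hW1 : (eW k (-1)) ^ (m + 2) * eW k ((m : ℤ) + 1) * eW k 1 ∈ AW := by
          set w1 : List WIdx := List.replicate (m + 2) (⟨-1, by norm_num⟩ : WIdx)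
            ++ [⟨(m : ℤ) + 1, by omega⟩, ⟨1, by norm_num⟩] with hw1
          set B1 : List WIdx := (List.replicate (m + 1) (⟨-1, by norm_num⟩ : WIdx)
            ++ [⟨(m : ℤ) + 1, by omega⟩]) ++ [⟨-1, by norm_num⟩, ⟨1, by norm_num⟩] with hB1
          have hw1sum : (w1.map Subtype.val).sum = 0 := by
            simp [hw1, List.map_replicate, List.sum_replicate]; push_cast; ring
          have pw1 : w1.Perm B1 := by
            have e1 : w1 = List.replicate (m + 1) (⟨-1, by norm_num⟩ : WIdx)
                ++ ((⟨-1, by norm_num⟩ : WIdx) :: (⟨(m : ℤ) + 1, by omega⟩ : WIdx)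
                  :: [⟨1, by norm_num⟩]) := by
              rw [hw1, List.replicate_succ' (n := m + 1), List.append_assoc]
              rfl
            have e2 : B1 = List.replicate (m + 1) (⟨-1, by norm_num⟩ : WIdx)
                ++ ((⟨(m : ℤ) + 1, by omega⟩ : WIdx) :: (⟨-1, by norm_num⟩ : WIdx)
                  :: [⟨1, by norm_num⟩]) := by
              rw [hB1, List.append_assoc]
              rfl
            rw [e1, e2]
            exact List.Perm.append_left _ (List.Perm.swap _ _ _)
          have hd := perm_diff_mem k pw1 (m + 3) (by simp [hw1])
          rw [hw1sum] at hd
          have hmem1 : wordProd k B1 ∈ AW := by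
            rw [hB1, wordProd_append]
            have hfst : wordProd k (List.replicate (m + 1) (⟨-1, by norm_num⟩ : WIdx)
                ++ [⟨(m : ℤ) + 1, by omega⟩]) ∈ AW := by
              rw [wordProd_append, wordProd_replicate, wordProd_cons, wordProd_nil, mul_one]
              exact hT2'
            have hsnd : wordProd k [(⟨-1, by norm_num⟩ : WIdx), ⟨1, by norm_num⟩] ∈ AW := by
              rw [wordProd_cons, wordProd_cons, wordProd_nil, mul_one]
              exact gen1_mem k
            exact mul_mem hfst hsnd
          have : wordProd k w1 ∈ AW := by
            have hadd := add_mem (hD (m + 3) (by omega) _ hd) hmem1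
            simpa using hadd
          rwa [hw1, wordProd_append, wordProd_replicate, wordProd_cons, wordProd_cons,
            wordProd_nil, mul_one, ← mul_assoc] at this
        -- assemble via the theta identity
        have hz : ((m : ℤ) + 1) • ((eW k (-1)) ^ (m + 3) * eW k ((m : ℤ) + 3)) ∈ AW := by
          rw [theta_identity k m]
          refine sub_mem (sub_mem (add_mem (sub_mem (mul_mem (gen1_mem k) hT2)
            (mul_mem hT2 (gen1_mem k))) ?_) ?_) ?_
          · rw [zsmul_eq_mul]
            exact mul_mem (intCast_mem AW _) hW2
          · rw [zsmul_eq_mul]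
            exact mul_mem (intCast_mem AW _) hT2
          · rw [zsmul_eq_mul]
            exact mul_mem (intCast_mem AW _) hW1
        have hc : (((m : ℤ) + 1 : ℤ) : k) ≠ 0 :=
          Int.cast_ne_zero.mpr (by omega)
        have hsm : (((m : ℤ) + 1 : ℤ) : k) • ((eW k (-1)) ^ (m + 3) * eW k ((m : ℤ) + 3)) ∈ AW := by
          rw [Int.cast_smul_eq_zsmul k ((m : ℤ) + 1)
            ((eW k (-1)) ^ (m + 3) * eW k ((m : ℤ) + 3))]
          exact hz
        have := Subalgebra.smul_mem _ hsm ((((m : ℤ) + 1 : ℤ) : k)⁻¹)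
        rw [inv_smul_smul₀ hc] at this
        have hix : ((m : ℤ) + 3) = (((m + 3 : ℕ) : ℤ)) := by push_cast; ring
        rwa [hix] at this
    · -- at least two non-`e_{-1}` letters: a product of two shorter degree-zero words
      have hlen1 : 1 ≤ L₁.length := List.length_pos_iff.mpr hL₁ne
      have hfst : wordProd k (List.replicate py (⟨-1, by norm_num⟩ : WIdx) ++ [y]) ∈ AW :=
        ih (py + 1) (by omega) _ (by simp) hsumθ
      have hsnd : wordProd k L₁ ∈ AW := ih L₁.length (by omega) L₁ le_rfl hsumL₁
      exact mul_mem hfst hsnd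

end Main

/-- The degree-zero subalgebra of `U(W_{≥-1})` is generated as a `k`-algebra by
`e_0`, `e_{-1} e_1` and `e_{-1}² e_2`. -/
theorem degree_zero_finitely_generated (k : Type) [Field k] [CharZero k] :
    Subalgebra.toSubmodule
        (Algebra.adjoin k {eW k 0, eW k (-1) * eW k 1, (eW k (-1)) ^ 2 * eW k 2})
      = degZeroUW k := by
  apply le_antisymm
  · -- the subalgebra generated by the three elements consists of degree-zero elements
    have hone : (1 : UW k) ∈ degZeroUW k :=
      Submodule.subset_span ⟨[], by simp, by simp⟩
    have hmul : ∀ (x y : UW k), x ∈ degZeroUW k → y ∈ degZeroUW k → x * y ∈ degZeroUW k := by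
      intro x y hx hy
      have hle : degZeroUW k * degZeroUW k ≤ degZeroUW k := by
        rw [degZeroUW, Submodule.span_mul_span]
        refine Submodule.span_le.mpr ?_
        rintro z ⟨a, ⟨La, hLa, rfl⟩, b, ⟨Lb, hLb, rfl⟩, rfl⟩
        refine Submodule.subset_span ⟨La ++ Lb, ?_, (wordProd_append k La Lb).symm⟩
        rw [List.map_append, List.sum_append, hLa, hLb, add_zero]
      exact hle (Submodule.mul_mem_mul hx hy)
    have halg : Algebra.adjoin k {eW k 0, eW k (-1) * eW k 1, (eW k (-1)) ^ 2 * eW k 2}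
        ≤ (degZeroUW k).toSubalgebra hone hmul := by
      refine Algebra.adjoin_le ?_
      rintro x (rfl | rfl | rfl)
      · refine Submodule.subset_span ⟨[⟨0, by norm_num⟩], by simp, ?_⟩
        rw [wordProd_cons, wordProd_nil, mul_one]
      · refine Submodule.subset_span ⟨[⟨-1, by norm_num⟩, ⟨1, by norm_num⟩], by simp, ?_⟩
        rw [wordProd_cons, wordProd_cons, wordProd_nil, mul_one]
      · refine Submodule.subset_span
          ⟨[⟨-1, by norm_num⟩, ⟨-1, by norm_num⟩, ⟨2, by norm_num⟩], by simp, ?_⟩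
        rw [wordProd_cons, wordProd_cons, wordProd_cons, wordProd_nil, mul_one, pow_two,
          mul_assoc]
    intro x hx
    exact halg (by simpa using hx)
  · -- every degree-zero word lies in the subalgebra
    refine Submodule.span_le.mpr ?_
    rintro x ⟨L, hsum, rfl⟩
    exact word_mem_adjoin k L.length L le_rfl hsum
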